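/- As formal power series in q over Q: 1 + q^2*(1/(1-q) - q) + (q^6/(1-q^2)) * (q+q^2+q^4)/(1-q^5) + \sum_{m=3}^{\infty} q^{m(m+1)}/((1-q)(1-q^2)(1-q^5)(1-q^4)(1-q^6)(1-q^7)\cdots(1-q^m)) = (1/( (1-q^2)(1-q^5) )) * \prod_{k=1}^{\infty} 1/((1-q^{5k+2})(1-q^{5k+3})), assuming the second Rogers-Ramanujan identity; equivalently, the specialization t = 1, w = q^2 of the (t,w)-refinement for parts 2 and 3. -/

import Mathlib

noncomputable section

open PowerSeries Finset

def q : PowerSeries ℚ := PowerSeries.X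

lemma hq : q = PowerSeries.X := rfl

lemma hconst (j : ℕ) (hj : 1 ≤ j) : constantCoeff (1 - q ^ j) = 1 := by
  simp [q, zero_pow (by omega : j ≠ 0)]

lemma hinv (j : ℕ) (hj : 1 ≤ j) : (1 - q ^ j) * (1 - q ^ j)⁻¹ = 1 :=
  PowerSeries.mul_inv_cancel _ (by rw [hconst j hj]; exact one_ne_zero)

lemma hdvd_inv (j : ℕ) (hj : 1 ≤ j) : q ^ j ∣ (1 - q ^ j)⁻¹ - 1 :=
  ⟨(1 - q ^ j)⁻¹, by linear_combination hinv j hj⟩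

lemma coeff_eq_of_dvd {a b : ℚ⟦X⟧} {N n : ℕ} (h : q ^ (N + 1) ∣ a - b) (hn : n ≤ N) :
    coeff n a = coeff n b := by
  rw [hq, PowerSeries.X_pow_dvd_iff] at h
  have h2 := h n (by omega)
  rw [map_sub, sub_eq_zero] at h2
  exact h2

lemma coeff_congr_mul {a b c : ℚ⟦X⟧} {n N : ℕ} (h : q ^ (N + 1) ∣ a - b) (hn : n ≤ N) :
    coeff n (c * a) = coeff n (c * b) := by
  obtain ⟨d, hd⟩ := h
  exact coeff_eq_of_dvd ⟨c * d, by linear_combination c * hd⟩ hn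

lemma prod_one_dvd {s : Finset ℕ} {F : ℕ → ℚ⟦X⟧} {r : ℕ}
    (h : ∀ k ∈ s, q ^ r ∣ F k - 1) : q ^ r ∣ (∏ k ∈ s, F k) - 1 := by
  induction s using Finset.cons_induction with
  | empty => simp
  | cons a s ha ih =>
    rw [Finset.prod_cons]
    obtain ⟨c, hc⟩ := h a (Finset.mem_cons_self a s)
    obtain ⟨d, hd⟩ := ih fun k hk => h k (Finset.mem_cons_of_mem hk)
    exact ⟨F a * d + c, by linear_combination F a * hd + hc⟩

lemma coeff_mul_one_dvd {P Q : ℚ⟦X⟧} {n : ℕ} (h : q ^ (n + 1) ∣ Q - 1) :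
    coeff n (P * Q) = coeff n P := by
  obtain ⟨c, hc⟩ := h
  have : coeff n (P * Q) = coeff n (P * 1) :=
    coeff_congr_mul ⟨c, hc⟩ (le_refl n)
  simpa using this


/-- The `m`-th summand `q^{m(m+1)}/((1-q)(1-q²)(1-q⁵)(1-q⁴)(1-q⁶)⋯(1-q^m))`:
the usual factor `(1-q³)` is replaced by `(1-q⁵)`. -/
def term (m : ℕ) : PowerSeries ℚ :=
  q ^ (m * (m + 1)) * (1 - q)⁻¹ * (1 - q ^ 2)⁻¹ * (1 - q ^ 5)⁻¹ *
    ∏ j ∈ Icc 4 m, (1 - q ^ j)⁻¹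

/-- The infinite sum `∑_{m≥3} term m`, defined coefficientwise. -/
def sumTail : PowerSeries ℚ :=
  PowerSeries.mk fun N => coeff N (∑ m ∈ Icc 3 N, term m)

def RRterm (m : ℕ) : PowerSeries ℚ :=
  q ^ (m * (m + 1)) * ∏ j ∈ Icc 1 m, (1 - q ^ j)⁻¹

def RRS : PowerSeries ℚ :=
  PowerSeries.mk fun N => coeff N (∑ m ∈ Icc 1 N, RRterm m)

def F (k : ℕ) : PowerSeries ℚ := (1 - q ^ (5 * k + 2))⁻¹ * (1 - q ^ (5 * k + 3))⁻¹

def PiS : PowerSeries ℚ :=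
  PowerSeries.mk fun N => coeff N (∏ k ∈ range (N + 1), F k)

/-- The infinite product `∏_{k≥1} 1/((1-q^{5k+2})(1-q^{5k+3}))`, defined
coefficientwise. -/
def prodTail : PowerSeries ℚ :=
  PowerSeries.mk fun N =>
    coeff N
      (∏ k ∈ Icc 1 N, (1 - q ^ (5 * k + 2))⁻¹ * (1 - q ^ (5 * k + 3))⁻¹)

lemma coeff_term_eq_zero {n m : ℕ} (h : n < m) : coeff n (term m) = 0 := by
  have hd : q ^ (m * (m + 1)) ∣ term m :=
    ⟨(1 - q)⁻¹ * (1 - q ^ 2)⁻¹ * (1 - q ^ 5)⁻¹ * ∏ j ∈ Icc 4 m, (1 - q ^ j)⁻¹, by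
      rw [term]; ring⟩
  rw [hq, PowerSeries.X_pow_dvd_iff] at hd
  exact hd n (lt_of_lt_of_le h (Nat.le_mul_of_pos_right m (by omega)))

lemma coeff_RRterm_eq_zero {n m : ℕ} (h : n < m) : coeff n (RRterm m) = 0 := by
  have hd : q ^ (m * (m + 1)) ∣ RRterm m :=
    ⟨∏ j ∈ Icc 1 m, (1 - q ^ j)⁻¹, by rw [RRterm]⟩
  rw [hq, PowerSeries.X_pow_dvd_iff] at hd
  exact hd n (lt_of_lt_of_le h (Nat.le_mul_of_pos_right m (by omega)))

lemma sumTail_dvd (N : ℕ) : q ^ (N + 1) ∣ sumTail - ∑ m ∈ Icc 3 N, term m := by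
  rw [hq, PowerSeries.X_pow_dvd_iff]
  intro n hn
  rw [map_sub, sumTail, coeff_mk, sub_eq_zero, map_sum, map_sum]
  refine Finset.sum_subset (Finset.Icc_subset_Icc_right (by omega)) ?_
  intro m hm hm2
  simp only [Finset.mem_Icc] at hm hm2
  exact coeff_term_eq_zero (by omega)

lemma RRS_dvd (N : ℕ) : q ^ (N + 1) ∣ RRS - ∑ m ∈ Icc 1 N, RRterm m := by
  rw [hq, PowerSeries.X_pow_dvd_iff]
  intro n hn
  rw [map_sub, RRS, coeff_mk, sub_eq_zero, map_sum, map_sum]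
  refine Finset.sum_subset (Finset.Icc_subset_Icc_right (by omega)) ?_
  intro m hm hm2
  simp only [Finset.mem_Icc] at hm hm2
  exact coeff_RRterm_eq_zero (by omega)

lemma F_dvd (k r : ℕ) (h : r ≤ 5 * k + 2) : q ^ r ∣ F k - 1 := by
  obtain ⟨c, hc⟩ := hdvd_inv (5 * k + 2) (by omega)
  obtain ⟨d, hd⟩ := hdvd_inv (5 * k + 3) (by omega)
  have h1 : q ^ r ∣ (1 - q ^ (5 * k + 2))⁻¹ - 1 :=
    dvd_trans (pow_dvd_pow q h) ⟨c, hc⟩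
  have h2 : q ^ r ∣ (1 - q ^ (5 * k + 3))⁻¹ - 1 :=
    dvd_trans (pow_dvd_pow q (by omega : r ≤ 5 * k + 3)) ⟨d, hd⟩
  obtain ⟨c1, hc1⟩ := h1
  obtain ⟨d1, hd1⟩ := h2
  exact ⟨(1 - q ^ (5 * k + 2))⁻¹ * d1 + c1, by
    rw [F]; linear_combination (1 - q ^ (5 * k + 2))⁻¹ * hd1 + hc1⟩

lemma PiS_dvd (N : ℕ) : q ^ (N + 1) ∣ PiS - ∏ k ∈ range (N + 1), F k := by
  rw [hq, PowerSeries.X_pow_dvd_iff]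
  intro n hn
  rw [map_sub, PiS, coeff_mk, sub_eq_zero]
  rw [← Finset.prod_range_mul_prod_Ico F (by omega : n + 1 ≤ N + 1)]
  rw [coeff_mul_one_dvd]
  exact prod_one_dvd fun k hk => by
    simp only [Finset.mem_Ico] at hk
    exact F_dvd k (n + 1) (by omega)

lemma prodTail_dvd (N : ℕ) : q ^ (N + 1) ∣ prodTail - ∏ k ∈ Icc 1 N, F k := by
  rw [hq, PowerSeries.X_pow_dvd_iff]
  intro n hn
  rw [map_sub, prodTail, coeff_mk, sub_eq_zero]
  have hsplit : (∏ k ∈ Ioc 0 n, F k) * ∏ k ∈ Ioc n N, F k = ∏ k ∈ Ioc 0 N, F k :=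
    Finset.prod_Ioc_consecutive F (by omega) (by omega)
  have hIcc : ∀ M : ℕ, (Icc 1 M : Finset ℕ) = Ioc 0 M := fun M => by
    rw [← Finset.Icc_add_one_left_eq_Ioc]; rfl
  rw [show (∏ k ∈ Icc 1 n, (1 - q ^ (5 * k + 2))⁻¹ * (1 - q ^ (5 * k + 3))⁻¹)
      = ∏ k ∈ Icc 1 n, F k from rfl]
  rw [hIcc n, hIcc N, ← hsplit]
  rw [coeff_mul_one_dvd]
  exact prod_one_dvd fun k hk => by
    simp only [Finset.mem_Ioc] at hk
    exact F_dvd k (n + 1) (by omega)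

lemma prod_Icc_one_split {m : ℕ} (hm : 3 ≤ m) :
    ∏ j ∈ Icc 1 m, (1 - q ^ j)⁻¹
      = (1 - q)⁻¹ * (1 - q ^ 2)⁻¹ * (1 - q ^ 3)⁻¹ * ∏ j ∈ Icc 4 m, (1 - q ^ j)⁻¹ := by
  have hIcc : ∀ a M : ℕ, (Icc (a + 1) M : Finset ℕ) = Ioc a M := fun a M => by
    rw [← Finset.Icc_add_one_left_eq_Ioc]
  have hsplit : (∏ j ∈ Ioc 0 3, (1 - q ^ j)⁻¹) * ∏ j ∈ Ioc 3 m, (1 - q ^ j)⁻¹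
      = ∏ j ∈ Ioc 0 m, (1 - q ^ j)⁻¹ :=
    Finset.prod_Ioc_consecutive _ (by omega) (by omega)
  rw [hIcc 0 m, ← hsplit, show (Ioc 0 3 : Finset ℕ) = {1, 2, 3} from rfl,
    show (Icc 4 m : Finset ℕ) = Ioc 3 m from hIcc 3 m]
  rw [show (∏ j ∈ ({1, 2, 3} : Finset ℕ), (1 - q ^ j)⁻¹)
      = (1 - q ^ 1)⁻¹ * ((1 - q ^ 2)⁻¹ * (1 - q ^ 3)⁻¹) from by
    rw [Finset.prod_insert (by decide), Finset.prod_insert (by decide),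
      Finset.prod_singleton]]
  rw [pow_one]
  ring

lemma term_eq {m : ℕ} (hm : 3 ≤ m) : (1 - q ^ 5) * term m = (1 - q ^ 3) * RRterm m := by
  rw [term, RRterm, prod_Icc_one_split hm]
  have h3 := hinv 3 (by omega)
  have h5 := hinv 5 (by omega)
  linear_combination
    (q ^ (m * (m + 1)) * (1 - q)⁻¹ * (1 - q ^ 2)⁻¹ * ∏ j ∈ Icc 4 m, (1 - q ^ j)⁻¹) * h5
    - (q ^ (m * (m + 1)) * (1 - q)⁻¹ * (1 - q ^ 2)⁻¹ * ∏ j ∈ Icc 4 m, (1 - q ^ j)⁻¹) * h3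

lemma head_eq :
    (1 - q ^ 5) * (1 + q ^ 2 * ((1 - q)⁻¹ - q)
        + (q ^ 6 * (1 - q ^ 2)⁻¹) * ((q + q ^ 2 + q ^ 4) * (1 - q ^ 5)⁻¹))
      = (1 - q ^ 3) * (1 + RRterm 1 + RRterm 2) := by
  have hR1 : RRterm 1 = q ^ 2 * (1 - q)⁻¹ := by
    rw [RRterm, show (Icc 1 1 : Finset ℕ) = {1} from rfl, Finset.prod_singleton, pow_one]
  have hR2 : RRterm 2 = q ^ 6 * ((1 - q)⁻¹ * (1 - q ^ 2)⁻¹) := by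
    rw [RRterm, show (Icc 1 2 : Finset ℕ) = {1, 2} from rfl,
      Finset.prod_insert (by decide), Finset.prod_singleton, pow_one]
  rw [hR1, hR2]
  have h1 : (1 - q) * (1 - q)⁻¹ = 1 := by simpa using hinv 1 le_rfl
  have h2 := hinv 2 (by omega)
  have h5 := hinv 5 (by omega)
  linear_combination (q ^ 5 * (1 + q) - q ^ 6 * (1 + q + q ^ 2) * (1 - q ^ 2)⁻¹) * h1
    + (-(q ^ 6 * (1 + q ^ 2))) * h2
    + (q ^ 6 * (q + q ^ 2 + q ^ 4) * (1 - q ^ 2)⁻¹) * h5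

/-- The second Rogers-Ramanujan identity, as a hypothesis. -/
def RR2 : Prop :=
  1 + (PowerSeries.mk fun N =>
        coeff N
          (∑ m ∈ Icc 1 N, q ^ (m * (m + 1)) * ∏ j ∈ Icc 1 m, (1 - q ^ j)⁻¹))
    = PowerSeries.mk fun N =>
        coeff N
          (∏ k ∈ range (N + 1),
            (1 - q ^ (5 * k + 2))⁻¹ * (1 - q ^ (5 * k + 3))⁻¹)

/-- The specialization `t = 1`, `w = q²` of the `(t,w)`-refinement for parts 2
and 3: partitions into parts `≡ 2, 3 mod 5` with no 3's but 5's allowed. -/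
theorem stmt19 (hRR : RR2) :
    1 + q ^ 2 * ((1 - q)⁻¹ - q)
        + (q ^ 6 * (1 - q ^ 2)⁻¹) * ((q + q ^ 2 + q ^ 4) * (1 - q ^ 5)⁻¹)
        + sumTail
      = ((1 - q ^ 2)⁻¹ * (1 - q ^ 5)⁻¹) * prodTail := by
  have hRR' : 1 + RRS = PiS := hRR
  set H : ℚ⟦X⟧ := 1 + q ^ 2 * ((1 - q)⁻¹ - q)
      + (q ^ 6 * (1 - q ^ 2)⁻¹) * ((q + q ^ 2 + q ^ 4) * (1 - q ^ 5)⁻¹) with hH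
  have key : prodTail = (1 - q ^ 2) * ((1 - q ^ 5) * (H + sumTail)) := by
    apply PowerSeries.ext; intro n
    set N := n + 3 with hN
    have e1 : coeff n prodTail = coeff n (∏ k ∈ Icc 1 N, F k) :=
      coeff_eq_of_dvd (prodTail_dvd N) (by omega)
    have e2 : coeff n ((1 - q ^ 2) * ((1 - q ^ 5) * (H + sumTail)))
        = coeff n ((1 - q ^ 2) * ((1 - q ^ 5) * (H + ∑ m ∈ Icc 3 N, term m))) := by
      obtain ⟨d, hd⟩ := sumTail_dvd N
      exact coeff_congr_mul (N := N)
        ⟨(1 - q ^ 5) * d, by linear_combination (1 - q ^ 5) * hd⟩ (by omega)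
    have hs : ∑ m ∈ Icc 1 N, RRterm m
        = RRterm 1 + RRterm 2 + ∑ m ∈ Icc 3 N, RRterm m := by
      rw [← Finset.Ico_add_one_right_eq_Icc 1 N,
        ← Finset.sum_Ico_consecutive _ (by omega : 1 ≤ 3) (by omega : 3 ≤ N + 1),
        Finset.Ico_add_one_right_eq_Icc 3 N,
        show (Ico 1 3 : Finset ℕ) = {1, 2} from rfl,
        Finset.sum_insert (by decide), Finset.sum_singleton]
    have hterm : (1 - q ^ 5) * ∑ m ∈ Icc 3 N, term m
        = (1 - q ^ 3) * ∑ m ∈ Icc 3 N, RRterm m := by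
      rw [Finset.mul_sum, Finset.mul_sum]
      exact Finset.sum_congr rfl fun m hm =>
        term_eq (by simp only [Finset.mem_Icc] at hm; omega)
    have e3 : (1 - q ^ 5) * (H + ∑ m ∈ Icc 3 N, term m)
        = (1 - q ^ 3) * (1 + ∑ m ∈ Icc 1 N, RRterm m) := by
      rw [hs, hH]
      linear_combination head_eq + hterm
    have e4 : coeff n ((1 - q ^ 2) * ((1 - q ^ 3) * (1 + ∑ m ∈ Icc 1 N, RRterm m)))
        = coeff n ((1 - q ^ 2) * ((1 - q ^ 3) * (1 + RRS))) := by
      obtain ⟨d, hd⟩ := RRS_dvd N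
      exact coeff_congr_mul (N := N)
        ⟨-((1 - q ^ 3) * d), by linear_combination (-(1 - q ^ 3)) * hd⟩ (by omega)
    have e6 : coeff n ((1 - q ^ 2) * ((1 - q ^ 3) * PiS))
        = coeff n ((1 - q ^ 2) * ((1 - q ^ 3) * ∏ k ∈ range (N + 1), F k)) := by
      obtain ⟨d, hd⟩ := PiS_dvd N
      exact coeff_congr_mul (N := N)
        ⟨(1 - q ^ 3) * d, by linear_combination (1 - q ^ 3) * hd⟩ (by omega)
    have e7 : (1 - q ^ 2) * ((1 - q ^ 3) * ∏ k ∈ range (N + 1), F k)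
        = ∏ k ∈ Icc 1 N, F k := by
      rw [show ∏ k ∈ range (N + 1), F k = F 0 * ∏ k ∈ Icc 1 N, F k from by
        rw [Finset.range_eq_Ico, Finset.prod_eq_prod_Ico_succ_bot (by omega),
          Finset.Ico_add_one_right_eq_Icc]]
      rw [show F 0 = (1 - q ^ 2)⁻¹ * (1 - q ^ 3)⁻¹ from by rw [F]]
      have h2 := hinv 2 (by omega)
      have h3 := hinv 3 (by omega)
      linear_combination ((1 - q ^ 3) * (1 - q ^ 3)⁻¹ * ∏ k ∈ Icc 1 N, F k) * h2
        + (∏ k ∈ Icc 1 N, F k) * h3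
    calc coeff n prodTail = coeff n (∏ k ∈ Icc 1 N, F k) := e1
      _ = coeff n ((1 - q ^ 2) * ((1 - q ^ 3) * ∏ k ∈ range (N + 1), F k)) := by
            rw [e7]
      _ = coeff n ((1 - q ^ 2) * ((1 - q ^ 3) * PiS)) := e6.symm
      _ = coeff n ((1 - q ^ 2) * ((1 - q ^ 3) * (1 + RRS))) := by rw [hRR']
      _ = coeff n ((1 - q ^ 2) * ((1 - q ^ 3) * (1 + ∑ m ∈ Icc 1 N, RRterm m))) :=
            e4.symm
      _ = coeff n ((1 - q ^ 2) * ((1 - q ^ 5) * (H + ∑ m ∈ Icc 3 N, term m))) := by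
            rw [e3]
      _ = coeff n ((1 - q ^ 2) * ((1 - q ^ 5) * (H + sumTail))) := e2.symm
  rw [key]
  have h2 := hinv 2 (by omega)
  have h5 := hinv 5 (by omega)
  linear_combination (-((H + sumTail) * (1 - q ^ 2) * (1 - q ^ 2)⁻¹)) * h5
    + (-(H + sumTail)) * h2


end
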